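/- The real vector space of traceless 4×4 real matrices X that commute with both M(1,0) and M(cos(2π/3), sin(2π/3)) has dimension 3; explicitly, it equals the space of matrices with entries x₁ in positions (1,2) and (2,4), x₂ in positions (1,3) and (3,4), x₃ in position (1,4), and zero elsewhere. -/

import Mathlib

open Matrix Real

/-- The matrix `M(x,y)` from the `C₀`-type generalized cusp. -/
noncomputable def Mcusp (x y : ℝ) : Matrix (Fin 4) (Fin 4) ℝ :=
  !![1, x, y, (x ^ 2 + y ^ 2) / 2;
     0, 1, 0, x;
     0, 0, 1, y;
     0, 0, 0, 1]

/-- The space of traceless `4 × 4` real matrices commuting with every element of `S`. -/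
def tracelessCommutant (S : Set (Matrix (Fin 4) (Fin 4) ℝ)) :
    Submodule ℝ (Matrix (Fin 4) (Fin 4) ℝ) where
  carrier := {X | X.trace = 0 ∧ ∀ A ∈ S, X * A = A * X}
  add_mem' := by
    rintro X Y ⟨hX1, hX2⟩ ⟨hY1, hY2⟩
    refine ⟨by simp [trace_add, hX1, hY1], fun A hA => ?_⟩
    rw [add_mul, mul_add, hX2 A hA, hY2 A hA]
  zero_mem' := ⟨by simp, fun A hA => by simp⟩
  smul_mem' := by
    rintro c X ⟨hX1, hX2⟩
    refine ⟨by simp [hX1], fun A hA => ?_⟩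
    rw [smul_mul_assoc, mul_smul_comm, hX2 A hA]

/-- Auxiliary linear map picking out the commutant matrices. -/
def cuspBasisMap : (Fin 3 → ℝ) →ₗ[ℝ] Matrix (Fin 4) (Fin 4) ℝ where
  toFun v := !![0, v 0, v 1, v 2; 0, 0, 0, v 0; 0, 0, 0, v 1; 0, 0, 0, 0]
  map_add' u v := by
    ext i j
    fin_cases i <;> fin_cases j <;> simp [Matrix.add_apply, Matrix.vecHead, Matrix.vecTail]
  map_smul' c v := by
    ext i j
    fin_cases i <;> fin_cases j <;> simp [Matrix.smul_apply, Matrix.vecHead, Matrix.vecTail]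

/-- The traceless `4 × 4` real matrices commuting with both `M(1,0)` and
`M(cos(2π/3), sin(2π/3))` form a `3`-dimensional space, consisting exactly of the matrices
with entries `x₁` in positions `(1,2)` and `(2,4)`, `x₂` in positions `(1,3)` and `(3,4)`,
`x₃` in position `(1,4)`, and zero elsewhere (in `1`-based indexing). -/
theorem traceless_commutant_lattice :
    ((tracelessCommutant {Mcusp 1 0, Mcusp (cos (2 * π / 3)) (sin (2 * π / 3))} :
        Set (Matrix (Fin 4) (Fin 4) ℝ))
        = {X | ∃ x₁ x₂ x₃ : ℝ, X = !![0, x₁, x₂, x₃;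
                                      0, 0, 0, x₁;
                                      0, 0, 0, x₂;
                                      0, 0, 0, 0]}) ∧
      Module.finrank ℝ
        (tracelessCommutant {Mcusp 1 0, Mcusp (cos (2 * π / 3)) (sin (2 * π / 3))}) = 3 := by
  have hc : cos (2 * π / 3) = -(1/2) := by
    rw [show (2:ℝ) * π / 3 = π - π/3 by ring, Real.cos_pi_sub, Real.cos_pi_div_three]
  have hs : sin (2 * π / 3) = Real.sqrt 3 / 2 := by
    rw [show (2:ℝ) * π / 3 = π - π/3 by ring, Real.sin_pi_sub, Real.sin_pi_div_three]
  have hr : Real.sqrt 3 ^ 2 = 3 := Real.sq_sqrt (by norm_num)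
  have hAmat : Mcusp 1 0 = !![1,1,0,1/2; 0,1,0,1; 0,0,1,0; 0,0,0,1] := by
    rw [Mcusp]; norm_num
  have hBmat : Mcusp (cos (2 * π / 3)) (sin (2 * π / 3)) =
      !![1, -(1/2), Real.sqrt 3/2, 1/2; 0,1,0,-(1/2); 0,0,1, Real.sqrt 3/2; 0,0,0,1] := by
    rw [Mcusp, hc, hs]
    ext i j
    fin_cases i <;> fin_cases j <;> norm_num [div_pow, hr]
  have hset : ((tracelessCommutant {Mcusp 1 0, Mcusp (cos (2 * π / 3)) (sin (2 * π / 3))} :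
        Set (Matrix (Fin 4) (Fin 4) ℝ))
        = {X | ∃ x₁ x₂ x₃ : ℝ, X = !![0, x₁, x₂, x₃;
                                      0, 0, 0, x₁;
                                      0, 0, 0, x₂;
                                      0, 0, 0, 0]}) := by
    ext X
    simp only [SetLike.mem_coe, Set.mem_setOf_eq]
    constructor
    · rintro ⟨htr, hcomm⟩
      have hA0 := hcomm _ (Set.mem_insert _ _)
      have hB0 := hcomm _ (Set.mem_insert_of_mem _ rfl)
      rw [hAmat] at hA0
      rw [hBmat] at hB0
      have eA := fun i j => congrFun (congrFun hA0 i) j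
      have eB := fun i j => congrFun (congrFun hB0 i) j
      simp only [Matrix.mul_apply, Fin.sum_univ_four] at eA eB
      have hA00 := eA 0 0
      have hA01 := eA 0 1
      have hA02 := eA 0 2
      have hA03 := eA 0 3
      have hA10 := eA 1 0
      have hA11 := eA 1 1
      have hA12 := eA 1 2
      have hA13 := eA 1 3
      have hA21 := eA 2 1
      have hA23 := eA 2 3
      have hB02 := eB 0 2
      have hB03 := eB 0 3
      simp only [Fin.isValue, Matrix.of_apply, Nat.succ_eq_add_one, Nat.reduceAdd, Matrix.cons_val', Matrix.cons_val_succ, Matrix.cons_val_zero, Matrix.cons_val_one, Matrix.cons_val_two, Matrix.cons_val_three, Matrix.head_cons, Matrix.tail_cons, Matrix.head_fin_const, Matrix.empty_val', Matrix.cons_val_fin_one, Matrix.vecHead, Matrix.vecTail, Function.comp_apply, mul_zero, zero_mul, mul_one, one_mul, add_zero, zero_add] at hA00 hA01 hA02 hA03 hA10 hA11 hA12 hA13 hA21 hA23 hB02 hB03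
      simp only [Matrix.trace, Fin.sum_univ_four, Matrix.diag] at htr
      have g00 : X 0 0 = 0 := by linear_combination ((-1/8:ℝ)) * hA00 + ((1/2:ℝ)) * hA01 + ((1/12:ℝ) * Real.sqrt 3) * hA02 + ((1/16:ℝ)) * hA10 + ((-1/4:ℝ)) * hA11 + ((-1/8:ℝ) * Real.sqrt 3) * hA12 + ((1/4:ℝ)) * hA13 + ((1/6:ℝ) * Real.sqrt 3) * hB02 + ((1/4:ℝ)) * htr + (((-1/12:ℝ)) * X 0 0 + ((1/12:ℝ)) * X 2 2) * hr
      have g10 : X 1 0 = 0 := by linear_combination ((-1:ℝ)) * hA00 + ((1/2:ℝ)) * hA10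
      have g11 : X 1 1 = 0 := by linear_combination ((3/8:ℝ)) * hA00 + ((-1/2:ℝ)) * hA01 + ((1/12:ℝ) * Real.sqrt 3) * hA02 + ((-3/16:ℝ)) * hA10 + ((1/4:ℝ)) * hA11 + ((-1/8:ℝ) * Real.sqrt 3) * hA12 + ((1/4:ℝ)) * hA13 + ((1/6:ℝ) * Real.sqrt 3) * hB02 + ((1/4:ℝ)) * htr + (((-1/12:ℝ)) * X 0 0 + ((1/12:ℝ)) * X 2 2) * hr
      have g12 : X 1 2 = 0 := by linear_combination ((-1:ℝ)) * hA02 + ((1/2:ℝ)) * hA12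
      have g20 : X 2 0 = 0 := by linear_combination ((1:ℝ)) * hA21
      have g21 : X 2 1 = 0 := by linear_combination ((-1/2:ℝ)) * hA21 + ((1:ℝ)) * hA23
      have g22 : X 2 2 = 0 := by linear_combination ((-1/8:ℝ)) * hA00 + ((1/2:ℝ)) * hA01 + ((-1/4:ℝ) * Real.sqrt 3) * hA02 + ((1/16:ℝ)) * hA10 + ((-1/4:ℝ)) * hA11 + ((3/8:ℝ) * Real.sqrt 3) * hA12 + ((1/4:ℝ)) * hA13 + ((-1/2:ℝ) * Real.sqrt 3) * hB02 + ((1/4:ℝ)) * htr + (((1/4:ℝ)) * X 0 0 + ((-1/4:ℝ)) * X 2 2) * hr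
      have g30 : X 3 0 = 0 := by linear_combination ((-1:ℝ)) * hA10
      have g31 : X 3 1 = 0 := by linear_combination ((-1:ℝ)) * hA00 + ((1/2:ℝ)) * hA10 + ((-1:ℝ)) * hA11
      have g32 : X 3 2 = 0 := by linear_combination ((-1:ℝ)) * hA12
      have g33 : X 3 3 = 0 := by linear_combination ((-1/8:ℝ)) * hA00 + ((-1/2:ℝ)) * hA01 + ((1/12:ℝ) * Real.sqrt 3) * hA02 + ((1/16:ℝ)) * hA10 + ((1/4:ℝ)) * hA11 + ((-1/8:ℝ) * Real.sqrt 3) * hA12 + ((-3/4:ℝ)) * hA13 + ((1/6:ℝ) * Real.sqrt 3) * hB02 + ((1/4:ℝ)) * htr + (((-1/12:ℝ)) * X 0 0 + ((1/12:ℝ)) * X 2 2) * hr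
      have g13 : X 1 3 = X 0 1 := by linear_combination ((1/2:ℝ)) * hA01 + ((-1:ℝ)) * hA03 + ((-1/4:ℝ)) * hA11 + ((1/2:ℝ)) * hA13
      have g23 : X 2 3 = X 0 2 := by linear_combination ((1/2:ℝ) * Real.sqrt 3) * hA01 + ((-1/3:ℝ) * Real.sqrt 3) * hA03 + ((-1/4:ℝ) * Real.sqrt 3) * hA11 + ((1/2:ℝ) * Real.sqrt 3) * hA13 + ((-2/3:ℝ) * Real.sqrt 3) * hB03 + (((1/3:ℝ)) * X 0 2 + ((-1/3:ℝ)) * X 2 3) * hr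
      refine ⟨X 0 1, X 0 2, X 0 3, ?_⟩
      ext i j
      fin_cases i <;> fin_cases j <;>
        simp [Matrix.vecHead, Matrix.vecTail, g00, g10, g11, g12, g20, g21, g22, g30, g31, g32, g33, g13, g23]
    · rintro ⟨x₁, x₂, x₃, rfl⟩
      refine ⟨by simp [Matrix.trace, Fin.sum_univ_four, Matrix.diag, Matrix.vecHead, Matrix.vecTail], ?_⟩
      intro A hA
      rw [Set.mem_insert_iff, Set.mem_singleton_iff] at hA
      rcases hA with rfl | rfl
      · rw [hAmat]
        ext i j
        fin_cases i <;> fin_cases j <;>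
          simp [Matrix.mul_apply, Fin.sum_univ_four, Matrix.vecHead, Matrix.vecTail] <;> ring
      · rw [hBmat]
        ext i j
        fin_cases i <;> fin_cases j <;>
          simp [Matrix.mul_apply, Fin.sum_univ_four, Matrix.vecHead, Matrix.vecTail] <;> ring
  refine ⟨hset, ?_⟩
  have hrange : LinearMap.range cuspBasisMap
      = tracelessCommutant {Mcusp 1 0, Mcusp (cos (2 * π / 3)) (sin (2 * π / 3))} := by
    apply le_antisymm
    · rintro Y ⟨v, rfl⟩
      rw [← SetLike.mem_coe, hset]
      exact ⟨v 0, v 1, v 2, rfl⟩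
    · intro Y hY
      rw [← SetLike.mem_coe, hset] at hY
      obtain ⟨x₁, x₂, x₃, rfl⟩ := hY
      refine ⟨![x₁, x₂, x₃], ?_⟩
      show !![0, _, _, _; 0,0,0,_; 0,0,0,_; 0,0,0,0] = _
      norm_num
      rfl
  have hinj : Function.Injective cuspBasisMap := by
    intro u v h
    have h1 := congrFun (congrFun h 0) 1
    have h2 := congrFun (congrFun h 0) 2
    have h3 := congrFun (congrFun h 0) 3
    simp only [cuspBasisMap, LinearMap.coe_mk, AddHom.coe_mk] at h1 h2 h3
    norm_num at h1 h2 h3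
    funext k
    fin_cases k
    · exact h1
    · exact h2
    · exact h3
  rw [← hrange, LinearMap.finrank_range_of_inj hinj]
  simp
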